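/- T is monotone on [0,1]^n: if 0 ⪯ x ⪯ y ⪯ 1_n then T(x) ⪯ T(y), where T(x) = δ₁₂ K^{-1} 1_n + δ₁₁ K^{-1} diag(α) Ã x + (δ₂₂-δ₁₁) K^{-1} diag(α) diag(x) Ã x with δ₂₂ ≥ δ₁₁ and all parameters in (0,1), K = (δ₁₂+δ₂₁)I + δ₂₂ diag(α), Ã row-stochastic. -/
import Mathlib


/-- The auxiliary map `T` for the two-product self-social NCPM. -/
noncomputable def mapT {n : ℕ} (δ11 δ12 δ21 δ22 : ℝ) (α : Fin n → ℝ)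
    (Atil : Matrix (Fin n) (Fin n) ℝ) (x : Fin n → ℝ) : Fin n → ℝ :=
  fun i => (δ12 + δ11 * α i * (∑ j, Atil i j * x j)
    + (δ22 - δ11) * α i * x i * (∑ j, Atil i j * x j)) / (δ12 + δ21 + δ22 * α i)

theorem stmt_11 (n : ℕ) (δ11 δ12 δ21 δ22 : ℝ)
    (h11 : 0 < δ11 ∧ δ11 < 1) (h12 : 0 < δ12 ∧ δ12 < 1)
    (h21 : 0 < δ21 ∧ δ21 < 1) (h22 : 0 < δ22 ∧ δ22 < 1)
    (hrow1 : δ11 + δ12 = 1) (hrow2 : δ21 + δ22 = 1) (hord : δ11 ≤ δ22)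
    (α : Fin n → ℝ) (hα : ∀ i, 0 < α i ∧ α i < 1)
    (Atil : Matrix (Fin n) (Fin n) ℝ)
    (hA0 : ∀ i j, 0 ≤ Atil i j) (hA1 : ∀ i, ∑ j, Atil i j = 1)
    (x y : Fin n → ℝ)
    (hx0 : ∀ i, 0 ≤ x i) (hxy : ∀ i, x i ≤ y i) (hy1 : ∀ i, y i ≤ 1) :
    ∀ i, mapT δ11 δ12 δ21 δ22 α Atil x i ≤ mapT δ11 δ12 δ21 δ22 α Atil y i := by
  intro i
  unfold mapT
  have hαi := hα i
  have hden : 0 < δ12 + δ21 + δ22 * α i := by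
    have : 0 < δ22 * α i := mul_pos h22.1 hαi.1
    linarith [h12.1, h21.1]
  have hSx0 : 0 ≤ ∑ j, Atil i j * x j :=
    Finset.sum_nonneg fun j _ => mul_nonneg (hA0 i j) (hx0 j)
  have hS : (∑ j, Atil i j * x j) ≤ ∑ j, Atil i j * y j :=
    Finset.sum_le_sum fun j _ => mul_le_mul_of_nonneg_left (hxy j) (hA0 i j)
  have h1 : δ11 * α i * (∑ j, Atil i j * x j) ≤ δ11 * α i * (∑ j, Atil i j * y j) :=
    mul_le_mul_of_nonneg_left hS (mul_nonneg h11.1.le hαi.1.le)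
  have h2 : (δ22 - δ11) * α i * x i * (∑ j, Atil i j * x j)
      ≤ (δ22 - δ11) * α i * y i * (∑ j, Atil i j * y j) := by
    have hc : 0 ≤ (δ22 - δ11) * α i := mul_nonneg (by linarith) hαi.1.le
    have hxyi : (δ22 - δ11) * α i * x i ≤ (δ22 - δ11) * α i * y i :=
      mul_le_mul_of_nonneg_left (hxy i) hc
    exact mul_le_mul hxyi hS hSx0 (mul_nonneg hc ((hx0 i).trans (hxy i)))
  apply div_le_div_of_nonneg_right ?_ hden.le
  linarith
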